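/- arXiv:0708.0108 — 5 statements merged into one kernel-verified Lean document; each statement's English description precedes it below -/
import Mathlib

section
/- Let V be a complex vector space, let m ≥ 1, and let ξ ∈ ℂ satisfy ξ^m = 1. Suppose S ⊆ V is a nonempty finite set of vectors that is linearly independent over ℝ (regarding V as a real vector space), and suppose the set ξ • S = {ξ · v : v ∈ S} equals S. Then ξ = 1. -/
set_option maxHeartbeats 1000000

/-- If a finite nonempty set `S` of vectors in a complex vector space is linearly
independent over `ℝ` (restriction of scalars) and is stable under multiplication
by an `m`-th root of unity `ξ`, then `ξ = 1`.  (The key step showing that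
positive-dimensional cells of the decomposition `𝔛` have trivial stabilizer
in `μ_m`.) -/
theorem paper_root_of_unity_fixing_independent_set
    (V : Type*) [AddCommGroup V] [Module ℂ V] (m : ℕ) (hm : 1 ≤ m)
    (ξ : ℂ) (hξ : ξ ^ m = 1) (S : Finset V) (hS : S.Nonempty)
    (hind : LinearIndependent ℝ (fun v : (S : Set V) => (v : V)))
    (hstab : (fun v : V => ξ • v) '' (S : Set V) = (S : Set V)) :
    ξ = 1 := by
  classical
  by_contra hne
  have hfin : IsOfFinOrder ξ := isOfFinOrder_iff_pow_eq_one.2 ⟨m, hm, hξ⟩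
  set k := orderOf ξ with hk
  have hkpos : 0 < k := hfin.orderOf_pos
  have hξk : ξ ^ k = 1 := pow_orderOf_eq_one ξ
  obtain ⟨a, ha⟩ := hS
  have ha0 : a ≠ 0 := by
    have := hind.ne_zero ⟨a, by exact_mod_cast ha⟩
    simpa using this
  have hmem : ∀ j : ℕ, ξ ^ j • a ∈ S := by
    intro j
    induction j with
    | zero => simpa using ha
    | succ n ih =>
      have h1 : ξ • (ξ ^ n • a) ∈ (fun v : V => ξ • v) '' (S : Set V) :=
        ⟨_, by exact_mod_cast ih, rfl⟩
      rw [hstab] at h1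
      have : ξ ^ (n + 1) • a = ξ • ξ ^ n • a := by
        rw [pow_succ, mul_comm, mul_smul]
      rw [this]
      exact_mod_cast h1
  -- the orbit
  set T : Finset V := (Finset.range k).image (fun j => ξ ^ j • a) with hT
  have hξ0 : ξ ≠ 0 := by
    intro h
    rw [h, zero_pow (by omega : m ≠ 0)] at hξ
    exact zero_ne_one hξ
  have key : ∀ i j, i ≤ j → j < k → ξ ^ i = ξ ^ j → i = j := by
    intro i j hij hjk hpow
    by_contra hne'
    have hlt : i < j := lt_of_le_of_ne hij hne'
    have heq : ξ ^ i * ξ ^ (j - i) = ξ ^ i * 1 := by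
      rw [mul_one, ← pow_add, hpow]
      congr 1
      omega
    have h1 : ξ ^ (j - i) = 1 := mul_left_cancel₀ (pow_ne_zero _ hξ0) heq
    have hle : k ≤ j - i := hk ▸ orderOf_le_of_pow_eq_one (by omega : 0 < j - i) h1
    omega
  have hinj : ∀ i ∈ Finset.range k, ∀ j ∈ Finset.range k,
      ξ ^ i • a = ξ ^ j • a → i = j := by
    intro i hi j hj hij
    have hpow : ξ ^ i = ξ ^ j := by
      by_contra h
      have h0 : (ξ ^ i - ξ ^ j) • a = 0 := by rw [sub_smul, hij, sub_self]
      rcases smul_eq_zero.1 h0 with h' | h'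
      · exact h (sub_eq_zero.1 h')
      · exact ha0 h'
    rcases le_total i j with h | h
    · exact key i j h (Finset.mem_range.1 hj) hpow
    · exact (key j i h (Finset.mem_range.1 hi) hpow.symm).symm
  have hTsum : ∑ v ∈ T, v = 0 := by
    rw [hT, Finset.sum_image hinj, ← Finset.sum_smul]
    have : ∑ j ∈ Finset.range k, ξ ^ j = 0 := by
      rw [geom_sum_eq hne, hξk, sub_self, zero_div]
    rw [this, zero_smul]
  have hTS : (T : Set V) ⊆ (S : Set V) := by
    intro v hv
    simp only [hT, Finset.coe_image, Set.mem_image] at hv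
    obtain ⟨j, _, rfl⟩ := hv
    exact_mod_cast hmem j
  -- build the Finsupp
  set l : V →₀ ℝ := ∑ v ∈ T, Finsupp.single v 1 with hl
  have hlval : ∀ v ∈ T, l v = 1 := by
    intro v hv
    rw [hl, Finsupp.finset_sum_apply]
    rw [Finset.sum_eq_single v]
    · simp
    · intro b hb hbv; simp [Finsupp.single_apply, hbv]
    · intro h; exact absurd hv h
  have hlsupp : l ∈ Finsupp.supported ℝ ℝ (S : Set V) := by
    rw [Finsupp.mem_supported]
    intro v hv
    simp only [Finset.mem_coe, Finsupp.mem_support_iff] at hv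
    by_contra hvS
    have hvT : v ∉ T := fun h => hvS (hTS h)
    have : l v = 0 := by
      rw [hl, Finsupp.finset_sum_apply]
      apply Finset.sum_eq_zero
      intro b hb
      have : b ≠ v := fun h => hvT (h ▸ hb)
      simp [Finsupp.single_apply, this]
    exact hv this
  have hl0 : Finsupp.linearCombination ℝ (id : V → V) l = 0 := by
    rw [hl, map_sum]
    rw [← hTsum]
    apply Finset.sum_congr rfl
    intro v hv
    simp [Finsupp.linearCombination_single]
  have := (linearIndepOn_iff (v := (id : V → V))).1 hind l hlsupp hl0
  have hTa : a ∈ T := by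
    rw [hT]
    exact Finset.mem_image.2 ⟨0, Finset.mem_range.2 hkpos, by simp⟩
  have : l a = 0 := by rw [this]; rfl
  rw [hlval a hTa] at this
  exact one_ne_zero this
end

section
/- Let m ≥ 1, let K = ℚ(ζ_m) be the m-th cyclotomic field, let s ≥ 1, and set V = K^s, a ℚ-vector space of dimension d = s·[K:ℚ]. Let V_∞ = ∏_{v} K_v^s be the product over all archimedean places v of K of the s-th powers of the corresponding completions K_v (so V_∞ is a real vector space of dimension d), with the canonical embedding V → V_∞ given componentwise by the completion maps. For a set T of archimedean places of K let V_T = {x ∈ V_∞ : x_v = 0 for all v ∉ T}. Let W ⊆ V be a ℚ-subspace with dim_ℚ W = d − 1, and let W_∞ be the topological closure in V_∞ of the image of W (equivalently, its ℝ-linear span, a hyperplane of V_∞). Then for every nonempty set T of archimedean places: dim_ℝ(W_∞ ∩ V_T) = dim_ℝ(V_T) − 1. -/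
set_option maxHeartbeats 1600000
set_option synthInstance.maxHeartbeats 400000

open NumberField

/-- The embedding of `K^s` into `V_∞ = ∏_v K_v^s` (realised inside
`∏_v ℂ^s` via the embeddings attached to the archimedean places). -/
noncomputable def paperIota (K : Type*) [Field K] [NumberField K] (s : ℕ) :
    (Fin s → K) → (InfinitePlace K → Fin s → ℂ) :=
  fun x v i => v.embedding (x i)

/-- `V_∞ = ∏_v K_v^s`, realised as the closure of the `ℝ`-span of the image of
`K^s` in `∏_v ℂ^s` (by weak approximation this closure is exactly the product
of the completions). -/
noncomputable def paperVinfty (K : Type*) [Field K] [NumberField K] (s : ℕ) :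
    Submodule ℝ (InfinitePlace K → Fin s → ℂ) :=
  (Submodule.span ℝ (Set.range (paperIota K s))).topologicalClosure

/-- The subspace of vectors supported on a set `T` of archimedean places. -/
noncomputable def paperSupportedOn (K : Type*) [Field K] [NumberField K] (s : ℕ)
    (T : Set (InfinitePlace K)) :
    Submodule ℝ (InfinitePlace K → Fin s → ℂ) where
  carrier := {x | ∀ v ∉ T, x v = 0}
  zero_mem' := fun _ _ => rfl
  add_mem' := by
    intro a b ha hb v hv
    simp only [Pi.add_apply, ha v hv, hb v hv, add_zero]
  smul_mem' := by
    intro c x hx v hv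
    simp only [Pi.smul_apply, hx v hv, smul_zero]

section PaperAux

open Module Submodule NumberField.InfinitePlace Module.Free
open scoped TensorProduct

variable (K : Type*) [Field K] [NumberField K] (s : ℕ)


/-- `paperIota` as a `ℚ`-linear map. -/
noncomputable def paperIotaL : (Fin s → K) →ₗ[ℚ] (InfinitePlace K → Fin s → ℂ) where
  toFun := paperIota K s
  map_add' x y := by funext v i; simp [paperIota]
  map_smul' q x := by
    funext v i
    simp [paperIota, Rat.smul_def, map_mul, map_ratCast]

@[simp] lemma paperIotaL_apply (x : Fin s → K) : paperIotaL K s x = paperIota K s x := rfl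

/-- Base change of `paperIotaL` to `ℝ`. -/
noncomputable def paperPhi : ℝ ⊗[ℚ] (Fin s → K) →ₗ[ℝ] (InfinitePlace K → Fin s → ℂ) :=
  (paperIotaL K s).liftBaseChange ℝ

lemma paperPhi_range :
    LinearMap.range (paperPhi K s) = span ℝ (Set.range (paperIota K s)) := by
  apply le_antisymm
  · rintro _ ⟨x, rfl⟩
    induction x using TensorProduct.induction_on with
    | zero => rw [map_zero]; exact zero_mem _
    | tmul a m =>
        simp only [paperPhi, LinearMap.liftBaseChange_tmul, paperIotaL_apply]
        exact smul_mem _ _ (subset_span ⟨m, rfl⟩)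
    | add x y hx hy => rw [map_add]; exact add_mem hx hy
  · rw [span_le]
    rintro _ ⟨m, rfl⟩
    exact ⟨1 ⊗ₜ m, by simp [paperPhi]⟩

open scoped Classical in
/-- The comparison map from the mixed space to `InfinitePlace K → ℂ`. -/
noncomputable def paperG : (mixedEmbedding.mixedSpace K) →ₗ[ℝ] (InfinitePlace K → ℂ) where
  toFun x v := if h : v.IsReal then (x.1 ⟨v, h⟩ : ℂ)
    else x.2 ⟨v, not_isReal_iff_isComplex.mp h⟩
  map_add' x y := by
    funext v
    by_cases h : v.IsReal <;> simp [h]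
  map_smul' r x := by
    funext v
    by_cases h : v.IsReal <;> simp [h, Complex.real_smul]

lemma paperG_apply_isReal (x : mixedEmbedding.mixedSpace K) {v : InfinitePlace K}
    (h : v.IsReal) : paperG K x v = (x.1 ⟨v, h⟩ : ℂ) := by
  simp [paperG, h]

lemma paperG_apply_isComplex (x : mixedEmbedding.mixedSpace K) {v : InfinitePlace K}
    (h : ¬ v.IsReal) :
    paperG K x v = x.2 ⟨v, not_isReal_iff_isComplex.mp h⟩ := by
  simp [paperG, h]

lemma paperG_injective : Function.Injective (paperG K) := by
  intro x y hxy
  have h : ∀ v, paperG K x v = paperG K y v := fun v => congrFun hxy v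
  refine Prod.ext ?_ ?_
  · funext w
    have := h w.1
    rw [paperG_apply_isReal K x w.2, paperG_apply_isReal K y w.2] at this
    simpa [Subtype.coe_eta, Complex.ofReal_inj] using this
  · funext w
    have := h w.1
    have hw : ¬ (w.1).IsReal := not_isReal_iff_isComplex.mpr w.2
    rw [paperG_apply_isComplex K x hw, paperG_apply_isComplex K y hw] at this
    simpa [Subtype.coe_eta] using this

lemma paperG_mixed (x : K) :
    paperG K (mixedEmbedding K x) = fun v : InfinitePlace K => (v.embedding x : ℂ) := by
  funext v
  by_cases h : v.IsReal
  · rw [paperG_apply_isReal K _ h, mixedEmbedding.mixedEmbedding_apply_isReal,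
      embedding_of_isReal_apply]
  · rw [paperG_apply_isComplex K _ h, mixedEmbedding.mixedEmbedding_apply_isComplex]

lemma paper_indep_u :
    LinearIndependent ℝ (fun (j : Free.ChooseBasisIndex ℤ (𝓞 K)) =>
      (fun v : InfinitePlace K => (v.embedding (integralBasis K j) : ℂ))) := by
  have h := ((mixedEmbedding.latticeBasis K).linearIndependent).map'
    (paperG K) (LinearMap.ker_eq_bot.mpr (paperG_injective K))
  have heq : (paperG K ∘ mixedEmbedding.latticeBasis K) =
      fun j => (fun v : InfinitePlace K => (v.embedding (integralBasis K j) : ℂ)) := by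
    funext j
    rw [Function.comp_apply, mixedEmbedding.latticeBasis_apply, paperG_mixed]
  rwa [heq] at h

lemma paper_indep_fam :
    LinearIndependent ℝ (fun (p : (Σ _ : Fin s, ChooseBasisIndex ℤ (𝓞 K))) =>
      paperIota K s (Pi.single p.1 (integralBasis K p.2))) := by
  classical
  rw [Fintype.linearIndependent_iff]
  intro c hc
  have key : ∀ (i : Fin s) (j : ChooseBasisIndex ℤ (𝓞 K)), c ⟨i, j⟩ = 0 := by
    intro i j
    refine Fintype.linearIndependent_iff.mp (paper_indep_u K)
      (fun j => c ⟨i, j⟩) ?_ j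
    funext v
    have h0 := congrFun (congrFun hc v) i
    rw [Finset.sum_apply, Finset.sum_apply] at h0
    have hterm : ∀ (p : (Σ _ : Fin s, ChooseBasisIndex ℤ (𝓞 K))),
        (c p • paperIota K s (Pi.single p.1 (integralBasis K p.2))) v i
          = if i = p.1 then c p • (v.embedding (integralBasis K p.2) : ℂ) else 0 := by
      intro p
      simp only [Pi.smul_apply, paperIota, Pi.single_apply]
      split_ifs with h
      · rfl
      · simp
    rw [Finset.sum_congr rfl (fun p _ => hterm p)] at h0
    rw [← Finset.univ_sigma_univ, Finset.sum_sigma] at h0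
    simp only [Finset.sum_ite_eq, Finset.mem_univ, if_true] at h0
    -- h0 should now be : ∑ j, c ⟨i, j⟩ • v.embedding (integralBasis K j) = 0
    rw [Finset.sum_apply]
    simpa using h0
  intro p
  obtain ⟨i, j⟩ := p
  exact key i j

noncomputable def paperB : Basis (Σ _ : Fin s, ChooseBasisIndex ℤ (𝓞 K)) ℝ (ℝ ⊗[ℚ] (Fin s → K)) :=
  (Pi.basis (fun _ : Fin s => integralBasis K)).baseChange ℝ

lemma paperPhi_comp_basis (p : (Σ _ : Fin s, ChooseBasisIndex ℤ (𝓞 K))) :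
    paperPhi K s (paperB K s p) = paperIota K s (Pi.single p.1 (integralBasis K p.2)) := by
  rw [paperB, Basis.baseChange_apply, paperPhi, LinearMap.liftBaseChange_tmul, one_smul,
    Pi.basis_apply, paperIotaL_apply]

lemma paperPhi_injective : Function.Injective (paperPhi K s) := by
  rw [← LinearMap.ker_eq_bot, Submodule.eq_bot_iff]
  intro x hx
  have hrepr := (paperB K s).sum_repr x
  have h0 : ∑ p, ((paperB K s).repr x p) • paperPhi K s (paperB K s p) = 0 := by
    have h1 : paperPhi K s (∑ p, ((paperB K s).repr x p) • paperB K s p) = 0 := by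
      rw [hrepr]; exact hx
    simpa only [map_sum, map_smul] using h1
  have hz := Fintype.linearIndependent_iff.mp (paper_indep_fam K s)
    (fun p => (paperB K s).repr x p)
    (by simp only [← paperPhi_comp_basis K s]; exact h0)
  rw [← hrepr]
  simp only [hz]
  simp

lemma paper_span_image_eq (W : Submodule ℚ (Fin s → K)) :
    span ℝ (paperIota K s '' (W : Set (Fin s → K))) =
      Submodule.map (paperPhi K s) (W.baseChange ℝ) := by
  rw [Submodule.baseChange_eq_span, Submodule.map_span, Submodule.map_coe, ← Set.image_comp]
  congr 1
  apply Set.image_congr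
  intro w _
  simp [paperPhi, paperIotaL_apply]

lemma paper_baseChange_eq_range (W : Submodule ℚ (Fin s → K)) :
    W.baseChange ℝ = LinearMap.range ((W.subtype).baseChange ℝ) := by
  apply le_antisymm
  · exact le_rfl
  · rintro _ ⟨x, rfl⟩
    induction x using TensorProduct.induction_on with
    | zero => rw [map_zero]; exact zero_mem _
    | tmul a w =>
        rw [LinearMap.baseChange_tmul]
        exact Submodule.tmul_mem_baseChange_of_mem a w.2
    | add x y hx hy => rw [map_add]; exact add_mem hx hy

lemma paper_finrank_baseChange (W : Submodule ℚ (Fin s → K)) :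
    Module.finrank ℝ (W.baseChange ℝ) = Module.finrank ℚ W := by
  rw [paper_baseChange_eq_range]
  have hinj : Function.Injective ((W.subtype).baseChange ℝ) := by
    have := Module.Flat.lTensor_preserves_injective_linearMap (M := ℝ)
      W.subtype W.injective_subtype
    simpa [LinearMap.baseChange_eq_ltensor] using this
  rw [LinearMap.finrank_range_of_inj hinj, Module.finrank_baseChange]

lemma paper_finrank_span_image (W : Submodule ℚ (Fin s → K)) :
    Module.finrank ℝ (span ℝ (paperIota K s '' (W : Set (Fin s → K)))) =
      Module.finrank ℚ W := by
  have e := Submodule.equivMapOfInjective (paperPhi K s) (paperPhi_injective K s)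
    (W.baseChange ℝ)
  rw [paper_span_image_eq, ← paper_finrank_baseChange K s W]
  exact e.symm.finrank_eq

lemma paper_finrank_E :
    Module.finrank ℝ (span ℝ (Set.range (paperIota K s))) = s * Module.finrank ℚ K := by
  rw [← paperPhi_range, LinearMap.finrank_range_of_inj (paperPhi_injective K s),
    Module.finrank_baseChange, Module.finrank_pi_fintype]
  simp [Finset.sum_const, Finset.card_univ, mul_comm]

/-- The `ℝ`-subspace of `ℂ` spanned by the image of `v.embedding`. -/
noncomputable def paperCv (v : InfinitePlace K) : Submodule ℝ ℂ :=
  span ℝ (Set.range ⇑(v.embedding))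

lemma paperCv_one_mem (v : InfinitePlace K) : (1 : ℂ) ∈ paperCv K v :=
  subset_span ⟨1, map_one _⟩

lemma paperCv_isReal {v : InfinitePlace K} (h : v.IsReal) :
    paperCv K v = span ℝ {(1 : ℂ)} := by
  apply le_antisymm
  · rw [paperCv, span_le]
    rintro _ ⟨x, rfl⟩
    have hconj : (starRingEnd ℂ) (v.embedding x) = v.embedding x := by
      have hreal := ComplexEmbedding.isReal_iff.mp (isReal_iff.mp h)
      rw [← ComplexEmbedding.conjugate_coe_eq, hreal]
    have hre : ((v.embedding x).re : ℂ) = v.embedding x := Complex.conj_eq_iff_re.mp hconj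
    have : v.embedding x = ((v.embedding x).re : ℝ) • (1 : ℂ) := by
      rw [Complex.real_smul, mul_one, hre]
    rw [this]
    exact smul_mem _ _ (subset_span rfl)
  · rw [span_le, Set.singleton_subset_iff]
    exact paperCv_one_mem K v

lemma paperCv_isComplex {v : InfinitePlace K} (h : v.IsComplex) :
    paperCv K v = ⊤ := by
  have h1 : (1 : ℂ) ∈ paperCv K v := paperCv_one_mem K v
  have hnr : ¬ ComplexEmbedding.IsReal v.embedding := isComplex_iff.mp h
  obtain ⟨x, hx⟩ : ∃ x, (v.embedding x).im ≠ 0 := by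
    by_contra hc
    push_neg at hc
    apply hnr
    rw [ComplexEmbedding.isReal_iff]
    ext y
    rw [ComplexEmbedding.conjugate_coe_eq, Complex.conj_eq_iff_im]
    exact hc y
  set z : ℂ := v.embedding x with hz
  have hzmem : z ∈ paperCv K v := subset_span ⟨x, rfl⟩
  have hI : Complex.I ∈ paperCv K v := by
    have hIeq : Complex.I = (z.im)⁻¹ • z - ((z.im)⁻¹ * z.re) • (1 : ℂ) := by
      apply Complex.ext
      · simp [Complex.real_smul]
      · simp [Complex.real_smul]
        field_simp
    rw [hIeq]
    exact sub_mem (smul_mem _ _ hzmem) (smul_mem _ _ h1)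
  rw [eq_top_iff]
  intro w _
  have hw : w = w.re • (1 : ℂ) + w.im • Complex.I := by
    simp [Complex.real_smul, Complex.re_add_im]
  rw [hw]
  exact add_mem (smul_mem _ _ h1) (smul_mem _ _ hI)

lemma paper_finrank_Cv (v : InfinitePlace K) :
    Module.finrank ℝ (paperCv K v) = mult v := by
  by_cases h : v.IsReal
  · rw [paperCv_isReal K h, finrank_span_singleton (one_ne_zero), mult, if_pos h]
  · rw [paperCv_isComplex K (not_isReal_iff_isComplex.mp h), mult, if_neg h, finrank_top,
      Complex.finrank_real_complex]

/-- A product of submodules is linearly equivalent to the product of the factors. -/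
noncomputable def paperPiEquiv {ι : Type*} [Fintype ι] {M : ι → Type*}
    [∀ i, AddCommGroup (M i)] [∀ i, Module ℝ (M i)] (p : ∀ i, Submodule ℝ (M i)) :
    ↥(Submodule.pi Set.univ p) ≃ₗ[ℝ] (∀ i, ↥(p i)) where
  toFun x i := ⟨x.1 i, x.2 i (Set.mem_univ i)⟩
  map_add' x y := rfl
  map_smul' r x := rfl
  invFun f := ⟨fun i => f i, fun i _ => (f i).2⟩
  left_inv x := rfl
  right_inv f := rfl

/-- The product submodule `∏_v (C_v)^s`. -/
noncomputable def paperFfull : Submodule ℝ (InfinitePlace K → Fin s → ℂ) :=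
  Submodule.pi Set.univ (fun v => Submodule.pi Set.univ (fun _ : Fin s => paperCv K v))

lemma paper_finrank_Ffull :
    Module.finrank ℝ (paperFfull K s) = s * Module.finrank ℚ K := by
  rw [paperFfull, (paperPiEquiv (fun v => Submodule.pi Set.univ (fun _ : Fin s => paperCv K v))).finrank_eq, Module.finrank_pi_fintype]
  have hv : ∀ v : InfinitePlace K,
      Module.finrank ℝ (Submodule.pi Set.univ (fun _ : Fin s => paperCv K v))
        = s * mult v := by
    intro v
    rw [(paperPiEquiv (fun _ : Fin s => paperCv K v)).finrank_eq, Module.finrank_pi_fintype]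
    simp [paper_finrank_Cv, Finset.sum_const, Finset.card_univ]
  rw [Finset.sum_congr rfl (fun v _ => hv v), ← Finset.mul_sum, sum_mult_eq]

lemma paper_E_le_Ffull :
    span ℝ (Set.range (paperIota K s)) ≤ paperFfull K s := by
  rw [span_le]
  rintro _ ⟨x, rfl⟩
  intro v _
  intro i _
  exact subset_span ⟨x i, rfl⟩

lemma paper_trace_eq (z : K) :
    ((Algebra.trace ℚ K z : ℚ) : ℝ)
      = ∑ v : InfinitePlace K, (mult v : ℝ) * (v.embedding z).re := by
  classical
  have h : ((Algebra.trace ℚ K z : ℚ) : ℂ) = ∑ φ : K →+* ℂ, φ z := by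
    have h1 : algebraMap ℚ ℂ (Algebra.trace ℚ K z) = ∑ σ : K →ₐ[ℚ] ℂ, σ z :=
      trace_eq_sum_embeddings ℂ
    rw [eq_ratCast] at h1
    rw [h1]
    exact (Fintype.sum_equiv (RingHom.equivRatAlgHom K ℂ) (fun φ : K →+* ℂ => φ z)
      (fun σ : K →ₐ[ℚ] ℂ => σ z) (fun φ => rfl)).symm
  have h2 := congrArg Complex.re h
  rw [Complex.ratCast_re, Complex.re_sum] at h2
  rw [h2, ← Finset.sum_fiberwise Finset.univ (fun φ : K →+* ℂ => InfinitePlace.mk φ)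
    (fun φ => (φ z).re)]
  refine Finset.sum_congr rfl (fun v _ => ?_)
  have hconst : ∀ φ ∈ Finset.univ.filter (fun φ : K →+* ℂ => InfinitePlace.mk φ = v),
      (φ z).re = (v.embedding z).re := by
    intro φ hφ
    rw [Finset.mem_filter] at hφ
    have hv := hφ.2
    rw [← mk_embedding v, mk_eq_iff] at hv
    rcases hv with h' | h'
    · rw [h']
    · rw [← h', ComplexEmbedding.conjugate_coe_eq, Complex.conj_re]
  rw [Finset.sum_congr rfl hconst, Finset.sum_const, card_filter_mk_eq]
  simp [nsmul_eq_mul]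

/-- The trace pairing of `K^s`, as a map into the dual. -/
noncomputable def paperPsi : (Fin s → K) →ₗ[ℚ] Module.Dual ℚ (Fin s → K) where
  toFun a := ∑ i, ((Algebra.traceForm ℚ K) (a i)).comp (LinearMap.proj i)
  map_add' a b := by
    simp only [Pi.add_apply, map_add, LinearMap.add_comp]
    rw [Finset.sum_add_distrib]
  map_smul' q a := by
    simp only [Pi.smul_apply, map_smul, LinearMap.smul_comp, RingHom.id_apply]
    rw [Finset.smul_sum]

lemma paperPsi_apply (a y : Fin s → K) :
    paperPsi K s a y = ∑ i, Algebra.trace ℚ K (a i * y i) := by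
  simp [paperPsi, Algebra.traceForm_apply]

lemma paperPsi_injective : Function.Injective (paperPsi K s) := by
  rw [injective_iff_map_eq_zero]
  intro a ha
  funext i
  have key : ∀ t : K, Algebra.trace ℚ K (a i * t) = 0 := by
    intro t
    have h0 : paperPsi K s a (Pi.single i t) = 0 := by rw [ha]; rfl
    rw [paperPsi_apply] at h0
    have : ∀ i' : Fin s, Algebra.trace ℚ K (a i' * (Pi.single i t : Fin s → K) i')
        = if i' = i then Algebra.trace ℚ K (a i * t) else 0 := by
      intro i'
      rcases eq_or_ne i' i with rfl | hne
      · simp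
      · simp [Pi.single_eq_of_ne hne, hne]
    rwa [Finset.sum_congr rfl (fun i' _ => this i'), Finset.sum_ite_eq' Finset.univ i
      (fun _ => Algebra.trace ℚ K (a i * t)), if_pos (Finset.mem_univ i)] at h0
  have := (traceForm_nondegenerate ℚ K).1 (a i)
    (fun t => by simpa [Algebra.traceForm_apply] using key t)
  simpa using this

lemma paperPsi_surjective : Function.Surjective (paperPsi K s) :=
  (LinearMap.injective_iff_surjective_of_finrank_eq_finrank
    (Subspace.dual_finrank_eq).symm).mp (paperPsi_injective K s)

/-- The explicit real-linear functional associated to `a : K^s`. -/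
noncomputable def paperGa (a : Fin s → K) : (InfinitePlace K → Fin s → ℂ) → ℝ :=
  fun x => ∑ v, ∑ i, (mult v : ℝ) * ((v.embedding (a i)) * x v i).re

lemma paperGa_zero (a : Fin s → K) : paperGa K s a 0 = 0 := by
  simp [paperGa]

lemma paperGa_add (a : Fin s → K) (x y : InfinitePlace K → Fin s → ℂ) :
    paperGa K s a (x + y) = paperGa K s a x + paperGa K s a y := by
  simp [paperGa, mul_add, Complex.add_re, Finset.sum_add_distrib]

lemma paperGa_smul (a : Fin s → K) (r : ℝ) (x : InfinitePlace K → Fin s → ℂ) :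
    paperGa K s a (r • x) = r * paperGa K s a x := by
  simp only [paperGa, Pi.smul_apply, Complex.real_smul, Finset.mul_sum]
  refine Finset.sum_congr rfl (fun v _ => Finset.sum_congr rfl (fun i _ => ?_))
  rw [mul_left_comm, Complex.re_ofReal_mul]
  ring

lemma paperGa_iota (a y : Fin s → K) :
    paperGa K s a (paperIota K s y) = ((paperPsi K s a y : ℚ) : ℝ) := by
  rw [paperPsi_apply, paperGa]
  have : ∀ v : InfinitePlace K, ∀ i : Fin s,
      (mult v : ℝ) * ((v.embedding (a i)) * paperIota K s y v i).re
        = (mult v : ℝ) * ((v.embedding (a i * y i)).re) := by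
    intro v i
    rw [paperIota, ← map_mul]
  simp only [this]
  rw [Finset.sum_comm]
  push_cast
  refine Finset.sum_congr rfl (fun i _ => ?_)
  exact (paper_trace_eq K (a i * y i)).symm

lemma paperGa_vanish_span (a : Fin s → K) (S : Set (InfinitePlace K → Fin s → ℂ))
    (hS : ∀ x ∈ S, paperGa K s a x = 0) :
    ∀ x ∈ span ℝ S, paperGa K s a x = 0 := by
  intro x hx
  induction hx using Submodule.span_induction with
  | mem x hx => exact hS _ hx
  | zero => exact paperGa_zero K s a
  | add x y _ _ hx hy => rw [paperGa_add, hx, hy, add_zero]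
  | smul r x _ hx => rw [paperGa_smul, hx, mul_zero]

end PaperAux

open Module Submodule NumberField.InfinitePlace Module.Free in
/-- Lemma `technical` (§5.2) of the paper. -/
theorem paper_hyperplane_meets_every_component
    (m : ℕ) (hm : 0 < m) (K : Type*) [Field K] [NumberField K]
    [IsCyclotomicExtension {m} ℚ K]
    (s : ℕ) (hs : 1 ≤ s)
    (W : Submodule ℚ (Fin s → K))
    (hW : Module.finrank ℚ W = s * Module.finrank ℚ K - 1)
    (T : Set (InfinitePlace K)) (hT : T.Nonempty) :
    Module.finrank ℝ
      ↥(Submodule.span ℝ (paperIota K s '' (W : Set (Fin s → K))) ⊓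
          (paperVinfty K s ⊓ paperSupportedOn K s T)) =
    Module.finrank ℝ ↥(paperVinfty K s ⊓ paperSupportedOn K s T) - 1 := by
  classical
  have hVinf : paperVinfty K s = span ℝ (Set.range (paperIota K s)) := by
    rw [paperVinfty]
    exact le_antisymm (Submodule.topologicalClosure_minimal _ le_rfl
      (Submodule.closed_of_finiteDimensional _)) (Submodule.le_topologicalClosure _)
  rw [hVinf]
  set E := span ℝ (Set.range (paperIota K s)) with hE
  set P := paperSupportedOn K s T with hP
  set A := span ℝ (paperIota K s '' (W : Set (Fin s → K))) with hA
  set F := E ⊓ P with hF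
  have hn : 0 < Module.finrank ℚ K := Module.finrank_pos
  have hd : 1 ≤ s * Module.finrank ℚ K := Nat.mul_pos hs hn
  have hMfin : Module.finrank ℚ (Fin s → K) = s * Module.finrank ℚ K := by
    rw [Module.finrank_pi_fintype]
    simp [Finset.sum_const, mul_comm]
  have hAdim : Module.finrank ℝ A = s * Module.finrank ℚ K - 1 := by
    rw [hA, paper_finrank_span_image, hW]
  have hEdim : Module.finrank ℝ E = s * Module.finrank ℚ K := paper_finrank_E K s
  have hAE : A ≤ E := span_mono (Set.image_subset_range _ _)
  have hFE : F ≤ E := inf_le_left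
  have hnot : ¬ (F ≤ A) := by
    intro hFA
    have hEF : E = paperFfull K s := by
      apply Submodule.eq_of_le_of_finrank_le (paper_E_le_Ffull K s)
      rw [paper_finrank_Ffull, ← hEdim]
    have hWne : W ≠ ⊤ := by
      intro h
      rw [h, finrank_top, hMfin] at hW
      omega
    obtain ⟨f, hfW, hfne⟩ : ∃ f : Module.Dual ℚ (Fin s → K),
        (∀ y ∈ W, f y = 0) ∧ f ≠ 0 := by
      have hlt : W < ⊤ := lt_top_iff_ne_top.mpr hWne
      haveI : Nontrivial ((Fin s → K) ⧸ W) := Submodule.Quotient.nontrivial_iff.mpr (ne_of_lt hlt)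
      let b := Module.Free.chooseBasis ℚ ((Fin s → K) ⧸ W)
      obtain ⟨i0⟩ := b.index_nonempty
      refine ⟨(b.coord i0).comp W.mkQ, ?_, ?_⟩
      · intro y hy
        rw [LinearMap.comp_apply, Submodule.mkQ_apply,
          (Submodule.Quotient.mk_eq_zero W).mpr hy, map_zero]
      · intro hzero
        obtain ⟨y, hy⟩ := W.mkQ_surjective (b i0)
        have hz : (b.coord i0) (b i0) = 0 := by
          have := DFunLike.congr_fun hzero y
          simpa [hy] using this
        rw [Basis.coord_apply, Basis.repr_self] at hz
        simp at hz
    obtain ⟨a, rfl⟩ := paperPsi_surjective K s f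
    obtain ⟨v₀, hv₀⟩ := hT
    have hai : ∀ i, a i = 0 := by
      intro i
      set z : ℂ := (starRingEnd ℂ) (v₀.embedding (a i)) with hzdef
      have hzmem : z ∈ paperCv K v₀ := by
        by_cases h : v₀.IsReal
        · rw [hzdef, ← ComplexEmbedding.conjugate_coe_eq,
            ComplexEmbedding.isReal_iff.mp (isReal_iff.mp h)]
          exact subset_span ⟨a i, rfl⟩
        · rw [paperCv_isComplex K (not_isReal_iff_isComplex.mp h)]
          trivial
      set x : InfinitePlace K → Fin s → ℂ := Pi.single v₀ (Pi.single i z) with hxdef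
      have hxE : x ∈ E := by
        rw [hEF]
        intro v _ i' _
        rcases eq_or_ne v v₀ with rfl | hv
        · rw [hxdef, Pi.single_eq_same]
          rcases eq_or_ne i' i with rfl | hi
          · rw [Pi.single_eq_same]; exact hzmem
          · rw [Pi.single_eq_of_ne hi]; exact zero_mem _
        · rw [hxdef, Pi.single_eq_of_ne hv]; exact zero_mem _
      have hxP : x ∈ P := by
        intro v hv
        rw [hxdef, Pi.single_eq_of_ne (fun h => hv (by rw [h]; exact hv₀))]
      have hxA : x ∈ A := hFA ⟨hxE, hxP⟩
      have h0 : paperGa K s a x = 0 := by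
        refine paperGa_vanish_span K s a _ ?_ x hxA
        rintro _ ⟨y, hy, rfl⟩
        rw [paperGa_iota, hfW y hy]
        norm_num
      have hcomp : paperGa K s a x
          = (mult v₀ : ℝ) * Complex.normSq (v₀.embedding (a i)) := by
        rw [paperGa, Finset.sum_eq_single v₀]
        · rw [Finset.sum_eq_single i]
          · rw [hxdef, Pi.single_eq_same, Pi.single_eq_same, hzdef, Complex.mul_conj,
              Complex.ofReal_re]
          · intro i' _ hi'
            rw [hxdef, Pi.single_eq_same, Pi.single_eq_of_ne hi', mul_zero,
              Complex.zero_re, mul_zero]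
          · intro h; exact absurd (Finset.mem_univ i) h
        · intro v _ hv
          have hz0 : ∀ i', x v i' = 0 := by
            intro i'
            rw [hxdef, Pi.single_eq_of_ne hv]
            rfl
          simp [hz0]
        · intro h; exact absurd (Finset.mem_univ v₀) h
      rw [hcomp] at h0
      have hnsq : Complex.normSq (v₀.embedding (a i)) = 0 := by
        rcases mul_eq_zero.mp h0 with h | h
        · exact absurd h (by exact_mod_cast (mult_ne_zero : mult v₀ ≠ 0))
        · exact h
      have hz0 : v₀.embedding (a i) = 0 := Complex.normSq_eq_zero.mp hnsq
      exact v₀.embedding.injective (by rw [hz0, map_zero])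
    apply hfne
    have ha0 : a = 0 := funext hai
    rw [ha0, map_zero]
  have hAF := Submodule.finrank_sup_add_finrank_inf_eq A F
  have h1 : Module.finrank ℝ A < Module.finrank ℝ ↥(A ⊔ F) :=
    Submodule.finrank_lt_finrank_of_lt (left_lt_sup.mpr hnot)
  have h2 : Module.finrank ℝ ↥(A ⊔ F) ≤ Module.finrank ℝ E :=
    Submodule.finrank_mono (sup_le hAE hFE)
  omega
end

section
/- Let p ≥ 1 be a natural number and let z ∈ ℂ satisfy z^p = 1. Let k and k′ be integers such that z^{k′} ≠ 1. Then the complex number ((z^k − 1)/(z^{k′} − 1))^p is real. -/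
/-- The computation from the proof of Lemma `verytechnical` of the paper:
if `z^p = 1` and `z^{k'} ≠ 1`, then `((z^k - 1)/(z^{k'} - 1))^p` is a real
number. -/
theorem paper_root_of_unity_quotient_power_real
    (p : ℕ) (hp : 1 ≤ p) (z : ℂ) (hz : z ^ p = 1) (k k' : ℤ)
    (hk' : z ^ k' ≠ 1) :
    (((z ^ k - 1) / (z ^ k' - 1)) ^ p).im = 0 := by
  have hz0 : z ≠ 0 := by
    intro h
    rw [h, zero_pow (by omega : p ≠ 0)] at hz
    exact zero_ne_one hz
  have habs : ‖z‖ = 1 := by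
    have h1 : ‖z‖ ^ p = 1 := by rw [← norm_pow, hz, norm_one]
    exact (pow_eq_one_iff_of_nonneg (norm_nonneg z) (by omega : p ≠ 0)).mp h1
  have hconj : ∀ m : ℤ, (starRingEnd ℂ) (z ^ m) = (z ^ m)⁻¹ := by
    intro m
    rw [map_zpow₀, ← Complex.inv_eq_conj habs, inv_zpow]
  have hzk : z ^ k ≠ 0 := zpow_ne_zero _ hz0
  have hzk' : z ^ k' ≠ 0 := zpow_ne_zero _ hz0
  have hb : z ^ k' - 1 ≠ 0 := sub_ne_zero.mpr hk'
  have hbi : (z ^ k')⁻¹ - 1 ≠ 0 := by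
    refine sub_ne_zero.mpr fun h => hk' ?_
    rwa [inv_eq_one] at h
  set w := (z ^ k - 1) / (z ^ k' - 1) with hw
  have key : (starRingEnd ℂ) (w ^ p) = w ^ p := by
    rw [map_pow, map_div₀, map_sub, map_sub, map_one, hconj k, hconj k']
    have step : ((z ^ k)⁻¹ - 1) / ((z ^ k')⁻¹ - 1) = z ^ (k' - k) * w := by
      rw [div_eq_iff hbi, hw, zpow_sub₀ hz0]
      field_simp
      ring
    rw [step, mul_pow, ← zpow_natCast (z ^ (k' - k)), ← zpow_mul,
      mul_comm (k' - k) (p : ℤ), zpow_mul, zpow_natCast, hz, one_zpow, one_mul]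
  exact Complex.conj_eq_iff_im.mp key
end

section
/- Let R be a commutative ring, let d ∈ R, let n ≥ 2, and let E be the subgroup of SL_n(R) generated by the elementary matrices I + c·d·E_{ij} for c ∈ R and i ≠ j (where E_{ij} is the matrix with 1 in position (i,j) and 0 elsewhere). Then every diagonal matrix D ∈ SL_n(R) all of whose diagonal entries satisfy D_{ii} − 1 ∈ d²R lies in E. -/
open Matrix

private theorem key_ident (R : Type*) [CommRing R] (n : ℕ) (p q : Fin n) (hpq : p ≠ q)
    (d a b s : R) (hab : a * b = 1) (hs : a - 1 = d^2*s) :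
    transvection p q (-a*d) * transvection q p (-(b*s)*d) * transvection p q (1*d)
      * transvection q p (s*d)
    = Matrix.diagonal (fun i => if i = p then a else if i = q then b else 1) := by
  have h1 : q ≠ p := hpq.symm
  simp only [transvection, mul_add, add_mul, one_mul, mul_one,
    single_mul_single_same, single_mul_single_of_ne (h := hpq),
    single_mul_single_of_ne (h := h1), mul_zero, zero_mul, add_zero, zero_add]
  ext i j
  rcases eq_or_ne p i with hpi | hpi
  · subst hpi
    rcases eq_or_ne p j with hpj | hpj
    · subst hpj
      simp [hpq, h1]
      linear_combination (s*d^2 + s^2*d^4) * hab - (1+s*d^2)*hs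
    · rcases eq_or_ne q j with hqj | hqj
      · subst hqj
        simp [hpq, h1]
        linear_combination s*d^3*hab - d*hs
      · simp [hpq, h1, hpj, hqj, Ne.symm hpj, Ne.symm hqj]
  · rcases eq_or_ne q i with hqi | hqi
    · subst hqi
      rcases eq_or_ne p j with hpj | hpj
      · subst hpj
        simp [hpq, h1, hpi]
        linear_combination s*d*b*hs - s*d*hab
      · rcases eq_or_ne q j with hqj | hqj
        · subst hqj
          simp [hpq, h1, hpi, Ne.symm hpi]
          linear_combination b*hs - hab
        · simp [hpq, h1, hpi, hpj, hqj, Ne.symm hpi, Ne.symm hpj, Ne.symm hqj]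
    · rcases eq_or_ne i j with rfl | hij
      · simp [hpq, h1, hpi, hqi, Ne.symm hpi, Ne.symm hqi]
      · simp [hpq, h1, hpi, hqi, hij, Ne.symm hpi, Ne.symm hqi]

private theorem aux_reduction (R : Type*) [CommRing R] (d : R) (n : ℕ) (hn : 2 ≤ n) :
    ∀ m : ℕ, ∀ D : Matrix.SpecialLinearGroup (Fin n) R,
    (∀ i j : Fin n, i ≠ j → (D : Matrix (Fin n) (Fin n) R) i j = 0) →
    (∀ i : Fin n, ∃ s : R, (D : Matrix (Fin n) (Fin n) R) i i - 1 = d ^ 2 * s) →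
    (∀ i : Fin n, i.val + m < n → (D : Matrix (Fin n) (Fin n) R) i i = 1) →
    D ∈ Subgroup.closure
      {A : Matrix.SpecialLinearGroup (Fin n) R |
        ∃ (c : R) (i j : Fin n), i ≠ j ∧
          (A : Matrix (Fin n) (Fin n) R) = 1 + Matrix.single i j (c * d)} := by
  intro m
  induction m with
  | zero =>
    intro D hdiag hcong hforce
    have hD1 : D = 1 := by
      apply Subtype.ext
      ext i j
      rcases eq_or_ne i j with rfl | hij
      · simp [hforce i (by omega)]
      · simp [hdiag i j hij, Matrix.one_apply_ne hij]
    rw [hD1]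
    exact one_mem _
  | succ m IH =>
    intro D hdiag hcong hforce
    have hDdiag : (D : Matrix (Fin n) (Fin n) R)
        = Matrix.diagonal (fun i => (D : Matrix (Fin n) (Fin n) R) i i) := by
      ext i j
      rcases eq_or_ne i j with rfl | hij
      · simp
      · simp [Matrix.diagonal_apply_ne _ hij, hdiag i j hij]
    have hdet : ∏ i, (D : Matrix (Fin n) (Fin n) R) i i = 1 := by
      have := D.property
      rw [hDdiag, Matrix.det_diagonal] at this
      exact this
    rcases Nat.eq_zero_or_pos m with rfl | hm
    · -- last diagonal entry is forced to 1 by the determinant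
      apply IH D hdiag hcong
      intro i _
      rcases Nat.lt_or_ge i.val (n - 1) with hi | hi
      · exact hforce i (by omega)
      · have hival : i.val = n - 1 := by omega
        have hsingle : ∏ j, (D : Matrix (Fin n) (Fin n) R) j j
            = (D : Matrix (Fin n) (Fin n) R) i i := by
          apply Finset.prod_eq_single_of_mem i (Finset.mem_univ i)
          intro j _ hji
          apply hforce j
          have hj : j.val ≠ n - 1 := by
            intro h
            exact hji (Fin.ext (by omega))
          omega
        rw [← hsingle, hdet]
    · -- pair (k, k+1) with k = n - m - 1
      have hk1 : n - m - 1 + 1 < n := by omega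
      set k := n - m - 1 with hk
      set p : Fin n := ⟨k, by omega⟩ with hp
      set q : Fin n := ⟨k + 1, hk1⟩ with hq
      have hpq : p ≠ q := by
        simp [hp, hq, Fin.ext_iff]
      set a := (D : Matrix (Fin n) (Fin n) R) p p with ha
      obtain ⟨s, hs⟩ := hcong p
      rw [← ha] at hs
      set b := ∏ i ∈ Finset.univ.erase p, (D : Matrix (Fin n) (Fin n) R) i i with hb
      have hab : a * b = 1 := by
        rw [ha, hb]
        exact (Finset.mul_prod_erase Finset.univ
          (fun x => (D : Matrix (Fin n) (Fin n) R) x x) (Finset.mem_univ p)).trans hdet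
      have hba : b * a = 1 := by rw [mul_comm]; exact hab
      have hbs : b - 1 = d ^ 2 * (-(b * s)) := by
        linear_combination hab - b * hs
      -- the diagonal correction matrix W, a product of four elementary matrices
      set S : Set (Matrix.SpecialLinearGroup (Fin n) R) :=
        {A : Matrix.SpecialLinearGroup (Fin n) R |
          ∃ (c : R) (i j : Fin n), i ≠ j ∧
            (A : Matrix (Fin n) (Fin n) R) = 1 + Matrix.single i j (c * d)} with hS
      have hgen : ∀ (c : R) (i j : Fin n) (hij : i ≠ j),
          (⟨Matrix.transvection i j (c * d), by
            rw [Matrix.det_transvection_of_ne i j hij]⟩ :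
            Matrix.SpecialLinearGroup (Fin n) R) ∈ Subgroup.closure S := by
        intro c i j hij
        exact Subgroup.subset_closure ⟨c, i, j, hij, rfl⟩
      set W : Matrix.SpecialLinearGroup (Fin n) R :=
        ⟨Matrix.transvection p q (-b * d), by rw [Matrix.det_transvection_of_ne p q hpq]⟩ *
        ⟨Matrix.transvection q p (-(a * -(b*s)) * d), by
          rw [Matrix.det_transvection_of_ne q p hpq.symm]⟩ *
        ⟨Matrix.transvection p q (1 * d), by rw [Matrix.det_transvection_of_ne p q hpq]⟩ *
        ⟨Matrix.transvection q p (-(b*s) * d), by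
          rw [Matrix.det_transvection_of_ne q p hpq.symm]⟩ with hW
      have hWmem : W ∈ Subgroup.closure S :=
        mul_mem (mul_mem (mul_mem (hgen (-b) p q hpq) (hgen _ q p hpq.symm))
          (hgen 1 p q hpq)) (hgen _ q p hpq.symm)
      have hWcoe : (W : Matrix (Fin n) (Fin n) R)
          = Matrix.diagonal (fun i => if i = p then b else if i = q then a else 1) := by
        rw [hW]
        change Matrix.transvection p q (-b * d) * Matrix.transvection q p (-(a * -(b*s)) * d) *
          Matrix.transvection p q (1 * d) * Matrix.transvection q p (-(b*s) * d) = _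
        exact key_ident R n p q hpq d b a (-(b*s)) hba hbs
      set D' := D * W with hD'
      have hD'coe : (D' : Matrix (Fin n) (Fin n) R)
          = Matrix.diagonal (fun i => (D : Matrix (Fin n) (Fin n) R) i i *
              (if i = p then b else if i = q then a else 1)) := by
        conv_lhs => rw [hD', Matrix.SpecialLinearGroup.coe_mul, hDdiag, hWcoe,
          Matrix.diagonal_mul_diagonal]
      have hD'mem : D' ∈ Subgroup.closure S := by
        apply IH D'
        · intro i j hij
          rw [hD'coe]
          exact Matrix.diagonal_apply_ne _ hij
        · intro i
          rw [hD'coe, Matrix.diagonal_apply_eq]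
          by_cases hip : i = p
          · refine ⟨0, ?_⟩
            rw [if_pos hip, hip, ← ha, hab]
            ring
          · by_cases hiq : i = q
            · obtain ⟨t, ht⟩ := hcong i
              refine ⟨t + s + d ^ 2 * (t * s), ?_⟩
              rw [if_neg hip, if_pos hiq]
              linear_combination a * ht + hs + d ^ 2 * t * hs
            · obtain ⟨t, ht⟩ := hcong i
              refine ⟨t, ?_⟩
              rw [if_neg hip, if_neg hiq, mul_one]
              exact ht
        · intro i hi
          rw [hD'coe, Matrix.diagonal_apply_eq]
          by_cases hip : i = p
          · rw [if_pos hip, hip, ← ha, hab]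
          · have hne : i.val ≠ k := fun h => hip (Fin.ext h)
            have hik : i.val < k := by omega
            have hiq : i ≠ q := by
              intro h
              have hvq : i.val = k + 1 := congrArg Fin.val h
              omega
            rw [if_neg hip, if_neg hiq, mul_one]
            exact hforce i (by omega)
      have hDW : D = D' * W⁻¹ := by
        rw [hD', mul_assoc, mul_inv_cancel, mul_one]
      rw [hDW]
      exact mul_mem hD'mem (inv_mem hWmem)

/-- The "d-operations" reduction of §7.1 of the paper: over a commutative ring
`R`, any diagonal matrix in `SL_n(R)` whose diagonal entries are congruent to
`1` modulo `d²R` lies in the subgroup generated by the elementary matrices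
`I + c·d·E_{ij}` (`c ∈ R`, `i ≠ j`). -/
theorem paper_diagonal_reduction_by_d_operations
    (R : Type*) [CommRing R] (d : R) (n : ℕ) (hn : 2 ≤ n)
    (D : Matrix.SpecialLinearGroup (Fin n) R)
    (hdiag : ∀ i j : Fin n, i ≠ j → (D : Matrix (Fin n) (Fin n) R) i j = 0)
    (hcong : ∀ i : Fin n, ∃ s : R, (D : Matrix (Fin n) (Fin n) R) i i - 1 = d ^ 2 * s) :
    D ∈ Subgroup.closure
      {A : Matrix.SpecialLinearGroup (Fin n) R |
        ∃ (c : R) (i j : Fin n), i ≠ j ∧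
          (A : Matrix (Fin n) (Fin n) R) = 1 + Matrix.single i j (c * d)} := by
  exact aux_reduction R d n hn n D hdiag hcong (fun i hi => absurd hi (by omega))
end

section
/- Let k be a number field with ring of integers 𝒪, let m ≥ 2 be an integer, and let R be the subring of k consisting of all elements that are v-integral for every finite place v of k dividing m. Let n ≥ 2, let H be a normal subgroup of SL_n(R) of finite index, and let d be a positive integer such that the index of H divides d and m divides d. Then every matrix A ∈ SL_n(R) that is congruent to the identity modulo d²R (i.e. every entry of A − I lies in d²R) belongs to H. -/
/-- The ring `R` of the paper (§7.1): the subring of a number field `k`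
consisting of the elements that are `v`-integral at every finite place `v`
dividing `m`. -/
noncomputable def paperSRing (k : Type*) [Field k] [NumberField k] (m : ℕ) : Subring k :=
  ⨅ v ∈ {v : IsDedekindDomain.HeightOneSpectrum (NumberField.RingOfIntegers k) |
      (m : NumberField.RingOfIntegers k) ∈ v.asIdeal},
    (IsDedekindDomain.HeightOneSpectrum.valuation (K := k) v).integer
open Matrix
namespace PaperAux
variable {R : Type*} [CommRing R] {n : ℕ}

def elSL (i j : Fin n) (hij : i ≠ j) (c : R) : Matrix.SpecialLinearGroup (Fin n) R :=
  ⟨Matrix.transvection i j c, Matrix.det_transvection_of_ne i j hij c⟩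

@[simp] lemma elSL_coe (i j : Fin n) (hij : i ≠ j) (c : R) :
    (elSL i j hij c : Matrix (Fin n) (Fin n) R) = Matrix.transvection i j c := rfl

lemma elSL_mul (i j : Fin n) (hij : i ≠ j) (c d : R) :
    elSL i j hij c * elSL i j hij d = elSL i j hij (c + d) :=
  Subtype.ext (Matrix.transvection_mul_transvection_same i j hij c d)

lemma elSL_zero (i j : Fin n) (hij : i ≠ j) : elSL i j hij (0:R) = 1 :=
  Subtype.ext (Matrix.transvection_zero i j)

lemma elSL_inv (i j : Fin n) (hij : i ≠ j) (c : R) :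
    (elSL i j hij c)⁻¹ = elSL i j hij (-c) := by
  apply inv_eq_of_mul_eq_one_right
  rw [elSL_mul, add_neg_cancel, elSL_zero]

lemma elSL_pow (i j : Fin n) (hij : i ≠ j) (c : R) (N : ℕ) :
    (elSL i j hij c) ^ N = elSL i j hij ((N : R) * c) := by
  induction N with
  | zero => simp [elSL_zero]
  | succ N ih =>
    rw [pow_succ, ih, elSL_mul]
    congr 1
    push_cast
    ring

lemma tv_apply (i j : Fin n) (c : R) (a b : Fin n) :
    Matrix.transvection i j c a b
      = (if a = b then (1:R) else 0) + (if a = i ∧ b = j then c else 0) := by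
  simp only [Matrix.transvection, Matrix.single, Matrix.one_apply, Matrix.add_apply,
    Matrix.of_apply]
  congr 1
  exact if_congr (by tauto) rfl rfl

def Pc (q : R) (A : Matrix.SpecialLinearGroup (Fin n) R) : Prop :=
  ∀ i j, q ∣ ((A : Matrix (Fin n) (Fin n) R) - 1) i j

lemma Pc_entry_ne {q : R} {A : Matrix.SpecialLinearGroup (Fin n) R} (hA : Pc q A)
    {i j : Fin n} (hij : i ≠ j) : q ∣ (A : Matrix (Fin n) (Fin n) R) i j := by
  have := hA i j
  simpa [Matrix.sub_apply, Matrix.one_apply, hij] using this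

lemma Pc_entry_eq {q : R} {A : Matrix.SpecialLinearGroup (Fin n) R} (hA : Pc q A)
    (i : Fin n) : q ∣ (A : Matrix (Fin n) (Fin n) R) i i - 1 := by
  have := hA i i
  simpa [Matrix.sub_apply, Matrix.one_apply] using this

lemma Pc_mul {q : R} {A B : Matrix.SpecialLinearGroup (Fin n) R}
    (hA : Pc q A) (hB : Pc q B) : Pc q (A * B) := by
  intro i j
  have h : ((A * B : Matrix.SpecialLinearGroup (Fin n) R) : Matrix (Fin n) (Fin n) R) - 1
      = ((A : Matrix (Fin n) (Fin n) R) - 1) * (B : Matrix (Fin n) (Fin n) R)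
        + ((B : Matrix (Fin n) (Fin n) R) - 1) := by
    rw [Matrix.SpecialLinearGroup.coe_mul, Matrix.sub_mul, Matrix.one_mul,
      sub_add_sub_cancel]
  rw [h, Matrix.add_apply, Matrix.mul_apply]
  exact dvd_add (Finset.dvd_sum fun k _ => (hA i k).mul_right _) (hB i j)

lemma Pc_inv {q : R} {A : Matrix.SpecialLinearGroup (Fin n) R}
    (hA : Pc q A) : Pc q A⁻¹ := by
  intro i j
  have hm : (A : Matrix (Fin n) (Fin n) R) * (A⁻¹ : Matrix.SpecialLinearGroup (Fin n) R) = 1 := by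
    rw [← Matrix.SpecialLinearGroup.coe_mul, mul_inv_cancel, Matrix.SpecialLinearGroup.coe_one]
  have h : ((A⁻¹ : Matrix.SpecialLinearGroup (Fin n) R) : Matrix (Fin n) (Fin n) R) - 1
      = (1 - (A : Matrix (Fin n) (Fin n) R))
        * ((A⁻¹ : Matrix.SpecialLinearGroup (Fin n) R) : Matrix (Fin n) (Fin n) R) := by
    rw [Matrix.sub_mul, Matrix.one_mul, hm]
  rw [h, Matrix.mul_apply]
  refine Finset.dvd_sum fun k _ => Dvd.dvd.mul_right ?_ _
  have := hA i k
  simpa [Matrix.sub_apply] using (dvd_neg.mpr this)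

lemma Pc_elSL {q : R} (i j : Fin n) (hij : i ≠ j) {c : R} (hc : q ∣ c) :
    Pc q (elSL i j hij c) := by
  intro a b
  have h : ((elSL i j hij c : Matrix (Fin n) (Fin n) R) - 1) a b
      = if a = i ∧ b = j then c else 0 := by
    rcases eq_or_ne a b with rfl | hab
    · have : ¬(a = i ∧ a = j) := by rintro ⟨rfl, rfl⟩; exact hij rfl
      simp [tv_apply, Matrix.sub_apply, Matrix.one_apply, this]
    · simp [tv_apply, Matrix.sub_apply, Matrix.one_apply, hab]
  rw [h]
  split
  · exact hc
  · exact dvd_zero q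




lemma whitehead_matrix (i j : Fin n) (hij : i ≠ j) (u w : R) (huw : u * w = 1) (a b : Fin n) :
    ((Matrix.transvection j i (w - 1) *
      (Matrix.transvection i j 1 *
        (Matrix.transvection j i (u - 1) *
          (Matrix.transvection i j (-1) * Matrix.transvection i j (-(w - 1))))) :
        Matrix (Fin n) (Fin n) R)) a b
      = (if a = b then (if a = i then u else if a = j then w else 1) else 0) := by
  have hji := hij.symm
  rw [Matrix.transvection_mul_transvection_same i j hij]
  by_cases hai : a = i
  · rw [hai]
    rw [Matrix.transvection_mul_apply_of_ne j i i b hij,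
        Matrix.transvection_mul_apply_same i j b,
        Matrix.transvection_mul_apply_of_ne j i i b hij,
        Matrix.transvection_mul_apply_same j i b]
    simp only [tv_apply]
    by_cases hbi : i = b <;> by_cases hbj : j = b <;>
      simp [hbi, hbj, hij, hji, @eq_comm _ b i, @eq_comm _ b j] <;>
      first
        | exact absurd (hbi.trans hbj.symm) hij
        | ring1
        | linear_combination huw
        | linear_combination (-1 : R) * huw
        | linear_combination w * huw
        | linear_combination -w * huw
        | linear_combination u * huw
        | linear_combination -u * huw
        | (simp_all [eq_comm] <;>
            first
              | ring1
              | linear_combination huw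
              | linear_combination (-1 : R) * huw
              | linear_combination w * huw
              | linear_combination -w * huw
              | linear_combination u * huw
              | linear_combination -u * huw
              | linear_combination (w + 1) * huw
              | linear_combination -(w + 1) * huw)
  · by_cases haj : a = j
    · rw [haj]
      rw [Matrix.transvection_mul_apply_same j i b,
          Matrix.transvection_mul_apply_of_ne i j j b hji,
          Matrix.transvection_mul_apply_same j i b,
          Matrix.transvection_mul_apply_same i j b,
          Matrix.transvection_mul_apply_of_ne j i i b hij,
          Matrix.transvection_mul_apply_same j i b]
      simp only [tv_apply]
      by_cases hbi : i = b <;> by_cases hbj : j = b <;>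
        simp [hbi, hbj, hij, hji, @eq_comm _ b i, @eq_comm _ b j] <;>
        first
          | exact absurd (hbi.trans hbj.symm) hij
          | ring1
          | linear_combination huw
          | linear_combination (-1 : R) * huw
          | linear_combination w * huw
          | linear_combination -w * huw
          | linear_combination u * huw
          | linear_combination -u * huw
          | (simp_all [eq_comm] <;>
              first
                | ring1
                | linear_combination huw
                | linear_combination (-1 : R) * huw
                | linear_combination w * huw
                | linear_combination -w * huw
                | linear_combination u * huw
                | linear_combination -u * huw
                | linear_combination (w + 1) * huw
                | linear_combination -(w + 1) * huw)
    · rw [Matrix.transvection_mul_apply_of_ne j i a b haj,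
          Matrix.transvection_mul_apply_of_ne i j a b hai,
          Matrix.transvection_mul_apply_of_ne j i a b haj,
          tv_apply]
      simp [hai, haj, Matrix.one_apply]



def ZZ (r : ℕ) (A : Matrix.SpecialLinearGroup (Fin n) R) : Prop :=
  ∀ i j : Fin n, i ≠ j → (i.val < r ∨ j.val < r) → (A : Matrix (Fin n) (Fin n) R) i j = 0

theorem abstract_main (q : R) (H : Subgroup (Matrix.SpecialLinearGroup (Fin n) R))
    (hnorm : H.Normal)
    (hel : ∀ (i j : Fin n) (hij : i ≠ j) (c : R), q ∣ c → elSL i j hij c ∈ H)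
    (hunit : ∀ x : R, q ∣ x → ∃ w : R, (1 + x) * w = 1 ∧ q ∣ (w - 1)) :
    ∀ A : Matrix.SpecialLinearGroup (Fin n) R, Pc q A → A ∈ H := by
  have hconj : ∀ g h : Matrix.SpecialLinearGroup (Fin n) R, h ∈ H → g * h * g⁻¹ ∈ H :=
    fun g h hh => hnorm.conj_mem h hh g
  -- Relative Whitehead lemma
  have hwh : ∀ (i j : Fin n) (hij : i ≠ j) (u w : R), u * w = 1 → q ∣ (u - 1) → q ∣ (w - 1) →
      ∀ W : Matrix.SpecialLinearGroup (Fin n) R,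
        (∀ a b, (W : Matrix (Fin n) (Fin n) R) a b
          = (if a = b then (if a = i then u else if a = j then w else 1) else 0)) → W ∈ H := by
    intro i j hij u w huw hu hw W hWv
    have hji := hij.symm
    have hP : elSL j i hji (w-1) * (elSL i j hij 1 * elSL j i hji (u-1) * (elSL i j hij 1)⁻¹)
        * elSL i j hij (-(w-1)) ∈ H := by
      refine H.mul_mem (H.mul_mem (hel j i hji _ hw) ?_) (hel i j hij _ (dvd_neg.mpr hw))
      exact hconj _ _ (hel j i hji _ hu)
    rw [elSL_inv] at hP
    have hPW : elSL j i hji (w-1) * (elSL i j hij 1 * elSL j i hji (u-1) * elSL i j hij (-1))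
        * elSL i j hij (-(w-1)) = W := by
      apply Subtype.ext
      have hcoe : ((elSL j i hji (w-1) * (elSL i j hij 1 * elSL j i hji (u-1) * elSL i j hij (-1))
            * elSL i j hij (-(w-1)) : Matrix.SpecialLinearGroup (Fin n) R)
            : Matrix (Fin n) (Fin n) R)
          = Matrix.transvection j i (w - 1) * (Matrix.transvection i j 1 *
              (Matrix.transvection j i (u - 1) * (Matrix.transvection i j (-1) *
                Matrix.transvection i j (-(w - 1))))) := by
        simp only [Matrix.SpecialLinearGroup.coe_mul, elSL_coe, Matrix.mul_assoc]
      rw [hcoe]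
      ext a b
      rw [whitehead_matrix i j hij u w huw a b, hWv a b]
    rwa [hPW] at hP
  -- Diagonal stage
  have hdiag : ∀ (c r : ℕ), n ≤ c + r →
      ∀ A : Matrix.SpecialLinearGroup (Fin n) R, Pc q A →
        (∀ i j : Fin n, i ≠ j → (A : Matrix (Fin n) (Fin n) R) i j = 0) →
        (∀ i : Fin n, i.val < r → (A : Matrix (Fin n) (Fin n) R) i i = 1) → A ∈ H := by
    have hbase : ∀ (r : ℕ), n ≤ r →
        ∀ A : Matrix.SpecialLinearGroup (Fin n) R,
          (∀ i j : Fin n, i ≠ j → (A : Matrix (Fin n) (Fin n) R) i j = 0) →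
          (∀ i : Fin n, i.val < r → (A : Matrix (Fin n) (Fin n) R) i i = 1) → A ∈ H := by
      intro r hr A hdg hone
      have hA1 : A = 1 := by
        apply Subtype.ext
        ext a b
        rcases eq_or_ne a b with rfl | hab
        · rw [hone a (lt_of_lt_of_le a.isLt hr)]
          simp [Matrix.one_apply]
        · rw [hdg a b hab]
          simp [Matrix.one_apply, hab]
      rw [hA1]
      exact H.one_mem
    intro c
    induction c with
    | zero =>
      intro r hr A hA hdg hone
      exact hbase r (by omega) A hdg hone
    | succ c IH =>
      intro r hr A hA hdg hone
      by_cases hrn : r < n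
      case neg => exact hbase r (by omega) A hdg hone
      case pos =>
      set ρ : Fin n := ⟨r, hrn⟩ with hρ
      have hu1 : q ∣ ((A : Matrix (Fin n) (Fin n) R) ρ ρ - 1) := Pc_entry_eq hA ρ
      obtain ⟨w, hw1, hw2⟩ := hunit _ hu1
      rw [show (1 + ((A : Matrix (Fin n) (Fin n) R) ρ ρ - 1))
          = (A : Matrix (Fin n) (Fin n) R) ρ ρ by ring] at hw1
      set u : R := (A : Matrix (Fin n) (Fin n) R) ρ ρ with hu
      by_cases hr1 : r + 1 < n
      case neg =>
        -- last diagonal entry: determinant forces u = 1, so A = 1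
        have hAd : (A : Matrix (Fin n) (Fin n) R)
            = Matrix.diagonal (fun i => (A : Matrix (Fin n) (Fin n) R) i i) := by
          ext a b
          rcases eq_or_ne a b with rfl | hab
          · simp
          · rw [hdg a b hab, Matrix.diagonal_apply_ne _ hab]
        have hdet : Matrix.det (A : Matrix (Fin n) (Fin n) R) = 1 := A.prop
        rw [hAd, Matrix.det_diagonal] at hdet
        have hprod : (∏ i, (A : Matrix (Fin n) (Fin n) R) i i) = u := by
          refine Finset.prod_eq_single ρ (fun i _ hne => ?_) (by simp)
          have : i.val < r := by
            have h1 : i.val < n := i.isLt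
            have h2 : i.val ≠ r := fun h => hne (Fin.ext h)
            omega
          exact hone i this
        rw [hprod] at hdet
        refine hbase (r+1) (by omega) A hdg ?_
        intro i hi
        rcases Nat.lt_succ_iff_lt_or_eq.mp hi with h | h
        · exact hone i h
        · have : i = ρ := Fin.ext h
          rw [this, ← hu, hdet]
      case pos =>
      set ρ' : Fin n := ⟨r+1, hr1⟩ with hρ'
      have hρρ' : ρ ≠ ρ' := by
        intro hh
        have h2 : r = r + 1 := congrArg Fin.val hh
        omega
      set f : Fin n → R := fun a => if a = ρ then u else if a = ρ' then w else 1 with hf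
      have hdetW : Matrix.det (Matrix.diagonal f) = 1 := by
        rw [Matrix.det_diagonal]
        have hsub : (∏ a, f a) = ∏ a ∈ ({ρ, ρ'} : Finset (Fin n)), f a := by
          refine (Finset.prod_subset (Finset.subset_univ _) fun x _ hx => ?_).symm
          simp only [Finset.mem_insert, Finset.mem_singleton, not_or] at hx
          simp [hf, hx.1, hx.2]
        rw [hsub, Finset.prod_pair hρρ']
        simp [hf, hρρ', Ne.symm hρρ', hw1]
      set W : Matrix.SpecialLinearGroup (Fin n) R := ⟨Matrix.diagonal f, hdetW⟩ with hW
      have hWv : ∀ a b, (W : Matrix (Fin n) (Fin n) R) a b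
          = (if a = b then (if a = ρ then u else if a = ρ' then w else 1) else 0) := by
        intro a b
        rcases eq_or_ne a b with rfl | hab
        · simp [hW, hf, Matrix.diagonal_apply_eq]
        · simp [hW, hab, Matrix.diagonal_apply_ne _ hab]
      have hWH : W ∈ H := by
        refine hwh ρ ρ' hρρ' u w hw1 hu1 hw2 W hWv
      have hPcW : Pc q W := by
        intro a b
        rcases eq_or_ne a b with rfl | hab
        · rw [Matrix.sub_apply, hWv a a, Matrix.one_apply_eq, if_pos rfl]
          rcases eq_or_ne a ρ with rfl | haρ
          · simpa using hu1
          · rcases eq_or_ne a ρ' with rfl | haρ'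
            · simpa [haρ] using hw2
            · simp [haρ, haρ']
        · rw [Matrix.sub_apply, hWv a b, Matrix.one_apply_ne hab, if_neg hab]
          simp
      -- the quotient D' = W⁻¹ * A
      set g : Fin n → R := fun a => if a = ρ then w else if a = ρ' then u else 1 with hg
      have hfg : ∀ a, g a * f a = 1 := by
        intro a
        rcases eq_or_ne a ρ with rfl | haρ
        · simp [hf, hg]
          linear_combination hw1
        · rcases eq_or_ne a ρ' with rfl | haρ'
          · simp [hf, hg, haρ, hw1]
          · simp [hf, hg, haρ, haρ']
      have hWDA : (W : Matrix (Fin n) (Fin n) R) * ((W⁻¹ * A : Matrix.SpecialLinearGroup (Fin n) R)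
          : Matrix (Fin n) (Fin n) R) = (A : Matrix (Fin n) (Fin n) R) := by
        rw [← Matrix.SpecialLinearGroup.coe_mul, mul_inv_cancel_left]
      have hD'v : ∀ a b, ((W⁻¹ * A : Matrix.SpecialLinearGroup (Fin n) R)
          : Matrix (Fin n) (Fin n) R) a b = g a * (A : Matrix (Fin n) (Fin n) R) a b := by
        intro a b
        have h1 : f a * ((W⁻¹ * A : Matrix.SpecialLinearGroup (Fin n) R)
            : Matrix (Fin n) (Fin n) R) a b = (A : Matrix (Fin n) (Fin n) R) a b := by
          rw [← hWDA]
          rw [hW]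
          rw [Matrix.diagonal_mul]
        calc ((W⁻¹ * A : Matrix.SpecialLinearGroup (Fin n) R) : Matrix (Fin n) (Fin n) R) a b
            = (g a * f a) * ((W⁻¹ * A : Matrix.SpecialLinearGroup (Fin n) R)
                : Matrix (Fin n) (Fin n) R) a b := by rw [hfg a, one_mul]
          _ = g a * (A : Matrix (Fin n) (Fin n) R) a b := by rw [mul_assoc, h1]
      have hD'H : W⁻¹ * A ∈ H := by
        refine IH (r+1) (by omega) (W⁻¹ * A) (Pc_mul (Pc_inv hPcW) hA) ?_ ?_
        · intro i j hij
          rw [hD'v i j, hdg i j hij, mul_zero]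
        · intro i hi
          rcases Nat.lt_succ_iff_lt_or_eq.mp hi with h | h
          · have hiρ : i ≠ ρ := by
              intro hh
              have h2 : i.val = r := congrArg Fin.val hh
              omega
            have hiρ' : i ≠ ρ' := by
              intro hh
              have h2 : i.val = r + 1 := congrArg Fin.val hh
              omega
            rw [hD'v i i, hone i h, hg]
            simp [hiρ, hiρ']
          · have hiρ : i = ρ := Fin.ext h
            rw [hD'v i i, hiρ, hg, ← hu]
            simp
            linear_combination hw1
      have : A = W * (W⁻¹ * A) := by group
      rw [this]
      exact H.mul_mem hWH hD'H
  -- Row clearing stage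
  have hrow : ∀ (r : Fin n),
      (∀ B : Matrix.SpecialLinearGroup (Fin n) R, Pc q B → ZZ (r.val+1) B → B ∈ H) →
      ∀ (c : ℕ) (A : Matrix.SpecialLinearGroup (Fin n) R), Pc q A → ZZ r.val A →
      (∀ i : Fin n, i ≠ r → (A : Matrix (Fin n) (Fin n) R) i r = 0) →
      (∀ j : Fin n, j ≠ r → c ≤ j.val → (A : Matrix (Fin n) (Fin n) R) r j = 0) → A ∈ H := by
    intro r cont c
    induction c with
    | zero =>
      intro A hA hZ hcolH hrowH
      refine cont A hA ?_
      intro i j hij hlt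
      rcases hlt with h | h
      · rcases Nat.lt_succ_iff_lt_or_eq.mp h with h' | h'
        · exact hZ i j hij (Or.inl h')
        · have : i = r := Fin.ext h'
          subst this
          exact hrowH j (Ne.symm hij) (Nat.zero_le _)
      · rcases Nat.lt_succ_iff_lt_or_eq.mp h with h' | h'
        · exact hZ i j hij (Or.inr h')
        · have : j = r := Fin.ext h'
          subst this
          exact hcolH i hij
    | succ c IH =>
      intro A hA hZ hcolH hrowH
      by_cases hc : c < n
      case neg =>
        refine IH A hA hZ hcolH ?_
        intro j hj hcj
        exact hrowH j hj (by omega)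
      case pos =>
      set τ : Fin n := ⟨c, hc⟩ with hτ
      by_cases hτr : τ = r
      · refine IH A hA hZ hcolH ?_
        intro j hj hcj
        have hjc : j.val ≠ c := by
          intro hh
          exact hj (by rw [← hτr]; exact Fin.ext hh)
        exact hrowH j hj (by omega)
      · -- clear the entry (r, τ)
        have hu1 : q ∣ ((A : Matrix (Fin n) (Fin n) R) r r - 1) := Pc_entry_eq hA r
        obtain ⟨w, hw1, hw2⟩ := hunit _ hu1
        rw [show (1 + ((A : Matrix (Fin n) (Fin n) R) r r - 1))
            = (A : Matrix (Fin n) (Fin n) R) r r by ring] at hw1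
        set γ : R := -((A : Matrix (Fin n) (Fin n) R) r τ) * w with hγdef
        have hγ : q ∣ γ := (dvd_neg.mpr (Pc_entry_ne hA (Ne.symm hτr))).mul_right _
        set E : Matrix.SpecialLinearGroup (Fin n) R := elSL r τ (Ne.symm hτr) γ with hE
        have hBv : ∀ a b, ((A * E : Matrix.SpecialLinearGroup (Fin n) R)
            : Matrix (Fin n) (Fin n) R) a b
            = if b = τ then (A : Matrix (Fin n) (Fin n) R) a τ
                + γ * (A : Matrix (Fin n) (Fin n) R) a r
              else (A : Matrix (Fin n) (Fin n) R) a b := by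
          intro a b
          rw [Matrix.SpecialLinearGroup.coe_mul, hE, elSL_coe]
          rcases eq_or_ne b τ with rfl | hbτ
          · rw [if_pos rfl, Matrix.mul_transvection_apply_same]
          · rw [if_neg hbτ, Matrix.mul_transvection_apply_of_ne _ _ _ _ hbτ]
        have hBrτ : ((A * E : Matrix.SpecialLinearGroup (Fin n) R)
            : Matrix (Fin n) (Fin n) R) r τ = 0 := by
          rw [hBv r τ, if_pos rfl, hγdef]
          linear_combination (-((A : Matrix (Fin n) (Fin n) R) r τ)) * hw1
        have hBH : A * E ∈ H := by
          refine IH (A * E) (Pc_mul hA (Pc_elSL _ _ _ hγ)) ?_ ?_ ?_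
          · intro i j hij hlt
            rw [hBv i j]
            rcases eq_or_ne j τ with rfl | hjτ
            · rw [if_pos rfl]
              rcases eq_or_ne i r with hir | hir
              · rcases hlt with h | h
                · rw [hir] at h
                  omega
                · have h1 : (A : Matrix (Fin n) (Fin n) R) r τ = 0 :=
                    hZ r τ (Ne.symm hτr) (Or.inr h)
                  rw [hir, hγdef, h1]
                  ring
              · rw [hcolH i hir, mul_zero, add_zero]
                exact hZ i τ hij hlt
            · rw [if_neg hjτ]
              exact hZ i j hij hlt
          · intro i hir
            rw [hBv i r, if_neg (Ne.symm hτr)]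
            exact hcolH i hir
          · intro j hj hcj
            rcases eq_or_ne j τ with rfl | hjτ
            · exact hBrτ
            · rw [hBv r j, if_neg hjτ]
              have hjc : j.val ≠ c := fun hh => hjτ (Fin.ext hh)
              exact hrowH j hj (by omega)
        have hAE : A = (A * E) * E⁻¹ := by group
        rw [hAE]
        exact H.mul_mem hBH (H.inv_mem (hel r τ (Ne.symm hτr) γ hγ))
  -- Column clearing stage
  have hcol : ∀ (r : Fin n),
      (∀ B : Matrix.SpecialLinearGroup (Fin n) R, Pc q B → ZZ (r.val+1) B → B ∈ H) →
      ∀ (c : ℕ) (A : Matrix.SpecialLinearGroup (Fin n) R), Pc q A → ZZ r.val A →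
      (∀ i : Fin n, i ≠ r → c ≤ i.val → (A : Matrix (Fin n) (Fin n) R) i r = 0) → A ∈ H := by
    intro r cont c
    induction c with
    | zero =>
      intro A hA hZ hcolH
      exact hrow r cont n A hA hZ (fun i hi => hcolH i hi (Nat.zero_le _))
        (fun j hj hnj => absurd j.isLt (by omega))
    | succ c IH =>
      intro A hA hZ hcolH
      by_cases hc : c < n
      case neg =>
        refine IH A hA hZ ?_
        intro i hi hci
        exact hcolH i hi (by omega)
      case pos =>
      set σ : Fin n := ⟨c, hc⟩ with hσ
      by_cases hσr : σ = r
      · refine IH A hA hZ ?_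
        intro i hi hci
        have hic : i.val ≠ c := by
          intro hh
          exact hi (by rw [← hσr]; exact Fin.ext hh)
        exact hcolH i hi (by omega)
      · -- clear the entry (σ, r)
        have hu1 : q ∣ ((A : Matrix (Fin n) (Fin n) R) r r - 1) := Pc_entry_eq hA r
        obtain ⟨w, hw1, hw2⟩ := hunit _ hu1
        rw [show (1 + ((A : Matrix (Fin n) (Fin n) R) r r - 1))
            = (A : Matrix (Fin n) (Fin n) R) r r by ring] at hw1
        set γ : R := -((A : Matrix (Fin n) (Fin n) R) σ r) * w with hγdef
        have hγ : q ∣ γ := (dvd_neg.mpr (Pc_entry_ne hA hσr)).mul_right _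
        set E : Matrix.SpecialLinearGroup (Fin n) R := elSL σ r hσr γ with hE
        have hBv : ∀ a b, ((E * A : Matrix.SpecialLinearGroup (Fin n) R)
            : Matrix (Fin n) (Fin n) R) a b
            = if a = σ then (A : Matrix (Fin n) (Fin n) R) σ b
                + γ * (A : Matrix (Fin n) (Fin n) R) r b
              else (A : Matrix (Fin n) (Fin n) R) a b := by
          intro a b
          rw [Matrix.SpecialLinearGroup.coe_mul, hE, elSL_coe]
          rcases eq_or_ne a σ with rfl | haσ
          · rw [if_pos rfl, Matrix.transvection_mul_apply_same]
          · rw [if_neg haσ, Matrix.transvection_mul_apply_of_ne _ _ _ _ haσ]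
        have hBσr : ((E * A : Matrix.SpecialLinearGroup (Fin n) R)
            : Matrix (Fin n) (Fin n) R) σ r = 0 := by
          rw [hBv σ r, if_pos rfl, hγdef]
          linear_combination (-((A : Matrix (Fin n) (Fin n) R) σ r)) * hw1
        have hBH : E * A ∈ H := by
          refine IH (E * A) (Pc_mul (Pc_elSL _ _ _ hγ) hA) ?_ ?_
          · intro i j hij hlt
            rw [hBv i j]
            rcases eq_or_ne i σ with rfl | hiσ
            · rw [if_pos rfl]
              rcases hlt with h | h
              · have h1 : (A : Matrix (Fin n) (Fin n) R) σ r = 0 := hZ σ r hσr (Or.inl h)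
                have h2 : (A : Matrix (Fin n) (Fin n) R) σ j = 0 := hZ σ j hij (Or.inl h)
                rw [h2, hγdef, h1]
                ring
              · have hjr : j ≠ r := by
                  intro hh
                  rw [hh] at h
                  omega
                rw [hZ σ j hij (Or.inr h), hZ r j (Ne.symm hjr) (Or.inr h)]
                ring
            · rw [if_neg hiσ]
              exact hZ i j hij hlt
          · intro i hi hci
            rcases eq_or_ne i σ with rfl | hiσ
            · exact hBσr
            · rw [hBv i r, if_neg hiσ]
              have hic : i.val ≠ c := fun hh => hiσ (Fin.ext hh)
              exact hcolH i hi (by omega)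
        have hAE : A = E⁻¹ * (E * A) := by group
        rw [hAE]
        exact H.mul_mem (H.inv_mem (hel σ r hσr γ hγ)) hBH
  -- Main elimination
  have hmain : ∀ (c r : ℕ), n ≤ c + r →
      ∀ A : Matrix.SpecialLinearGroup (Fin n) R, Pc q A → ZZ r A → A ∈ H := by
    intro c
    induction c with
    | zero =>
      intro r hr A hA hZ
      exact hdiag n 0 (by omega) A hA
        (fun i j hij => hZ i j hij (Or.inl (lt_of_lt_of_le i.isLt (by omega))))
        (fun i hi => absurd hi (by omega))
    | succ c IH =>
      intro r hr A hA hZ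
      by_cases hrn : r < n
      · exact hcol ⟨r, hrn⟩ (fun B hB hZB => IH (r+1) (by omega) B hB hZB) n A hA hZ
          (fun i hi hni => absurd i.isLt (by omega))
      · exact hdiag n 0 (by omega) A hA
          (fun i j hij => hZ i j hij (Or.inl (lt_of_lt_of_le i.isLt (by omega))))
          (fun i hi => absurd hi (by omega))
  intro A hA
  exact hmain n 0 (by omega) A hA (fun i j hij h => absurd h (by omega))


end PaperAux


open IsDedekindDomain NumberField in
lemma PaperAux.paper_exists_prime (k : Type*) [Field k] [NumberField k] (m : ℕ) (hm : 2 ≤ m) :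
    ∃ v : HeightOneSpectrum (RingOfIntegers k), (m : RingOfIntegers k) ∈ v.asIdeal := by
  have hnu : ¬ IsUnit (m : RingOfIntegers k) := by
    intro h
    have h2 := h.map (Algebra.norm ℤ)
    have h3 : (m : RingOfIntegers k) = algebraMap ℤ _ (m : ℤ) := by simp
    rw [h3, Algebra.norm_algebraMap_of_basis (RingOfIntegers.basis k)] at h2
    have hcard : 0 < Fintype.card (Module.Free.ChooseBasisIndex ℤ (RingOfIntegers k)) :=
      Fintype.card_pos
    rcases Int.isUnit_iff.mp h2 with h4 | h4
    · have : (1:ℤ) < (m:ℤ) ^ Fintype.card (Module.Free.ChooseBasisIndex ℤ (RingOfIntegers k)) :=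
        one_lt_pow₀ (by exact_mod_cast hm) (by omega)
      omega
    · have : (0:ℤ) < (m:ℤ) ^ Fintype.card (Module.Free.ChooseBasisIndex ℤ (RingOfIntegers k)) :=
        pow_pos (by positivity) _
      omega
  obtain ⟨M, hMmax, hle⟩ := Ideal.exists_le_maximal (Ideal.span {(m : RingOfIntegers k)})
    (by rw [Ne, Ideal.span_singleton_eq_top]; exact hnu)
  have hmM : (m : RingOfIntegers k) ∈ M := hle (Ideal.mem_span_singleton_self _)
  have hbot : M ≠ ⊥ := by
    intro h
    rw [h, Ideal.mem_bot] at hmM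
    have : (m:ℕ) = 0 := by exact_mod_cast hmM
    omega
  exact ⟨⟨M, hMmax.isPrime, hbot⟩, hmM⟩

open IsDedekindDomain NumberField in
lemma PaperAux.paper_mem_iff (k : Type*) [Field k] [NumberField k] (m : ℕ) (y : k) :
    y ∈ paperSRing k m ↔ ∀ v : HeightOneSpectrum (RingOfIntegers k),
      (m : RingOfIntegers k) ∈ v.asIdeal → v.valuation k y ≤ 1 := by
  simp [paperSRing, Subring.mem_iInf, Valuation.mem_integer_iff, Set.mem_setOf_eq]

open IsDedekindDomain NumberField in
lemma PaperAux.paper_inv_exists (k : Type*) [Field k] [NumberField k] (m : ℕ) (hm : 2 ≤ m)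
    (d : ℕ) (hmd : m ∣ d) (x : paperSRing k m) (hx : (d : paperSRing k m)^2 ∣ x) :
    ∃ w : paperSRing k m, (1 + x) * w = 1 := by
  obtain ⟨s, hs⟩ := hx
  have hxk : ((x : paperSRing k m) : k) = ((d:k))^2 * ((s : paperSRing k m) : k) := by
    rw [hs]
    push_cast
    ring
  have hy : ∀ v : HeightOneSpectrum (RingOfIntegers k), (m : RingOfIntegers k) ∈ v.asIdeal →
      v.valuation k (((1 + x : paperSRing k m) : k)) = 1 := by
    intro v hv
    have hdin : (d : RingOfIntegers k) ∈ v.asIdeal := by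
      obtain ⟨c, hc⟩ := hmd
      have : (d : RingOfIntegers k) = (m : RingOfIntegers k) * (c : RingOfIntegers k) := by
        rw [hc]; push_cast; ring
      rw [this]
      exact Ideal.mul_mem_right _ _ hv
    have hvd : v.valuation k (algebraMap (RingOfIntegers k) k (d : RingOfIntegers k)) < 1 := by
      rw [HeightOneSpectrum.valuation_lt_one_iff_dvd]
      exact Ideal.dvd_iff_le.mpr ((Ideal.span_singleton_le_iff_mem _).mpr hdin)
    have hdk : ((d:ℕ) : k) = algebraMap (RingOfIntegers k) k (d : RingOfIntegers k) := by
      push_cast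
      rfl
    have hvs : v.valuation k ((s : paperSRing k m) : k) ≤ 1 :=
      (PaperAux.paper_mem_iff k m _).mp s.property v hv
    have hxlt : v.valuation k ((x : paperSRing k m) : k) < 1 := by
      rw [hxk, _root_.map_mul, _root_.map_pow, hdk]
      calc v.valuation k (algebraMap (RingOfIntegers k) k (d : RingOfIntegers k)) ^ 2
            * v.valuation k ((s : paperSRing k m) : k)
          = v.valuation k (algebraMap (RingOfIntegers k) k (d : RingOfIntegers k))
            * (v.valuation k (algebraMap (RingOfIntegers k) k (d : RingOfIntegers k))
              * v.valuation k ((s : paperSRing k m) : k)) := by rw [sq, mul_assoc]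
        _ ≤ v.valuation k (algebraMap (RingOfIntegers k) k (d : RingOfIntegers k)) * 1 :=
            mul_le_mul_right (mul_le_one' hvd.le hvs) _
        _ = v.valuation k (algebraMap (RingOfIntegers k) k (d : RingOfIntegers k)) := mul_one _
        _ < 1 := hvd
    have hcoe : ((1 + x : paperSRing k m) : k) = 1 + ((x : paperSRing k m) : k) := by push_cast; ring
    rw [hcoe]
    exact Valuation.map_one_add_of_lt _ hxlt
  obtain ⟨v₀, hv₀⟩ := PaperAux.paper_exists_prime k m hm
  have hyne : ((1 + x : paperSRing k m) : k) ≠ 0 := by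
    intro h0
    have h1 := hy v₀ hv₀
    rw [h0, map_zero] at h1
    exact zero_ne_one h1
  have hinvmem : ((1 + x : paperSRing k m) : k)⁻¹ ∈ paperSRing k m := by
    rw [PaperAux.paper_mem_iff]
    intro v hv
    rw [map_inv₀, hy v hv, inv_one]
  exact ⟨⟨_, hinvmem⟩, Subtype.ext (mul_inv_cancel₀ hyne)⟩

/-- Main step of Lemma `congruence` (§7.1) of the paper: if `H` is a normal
subgroup of `SL_n(R)` of finite index, and `d` is a positive integer divisible
both by `m` and by the index of `H`, then every matrix congruent to the
identity modulo `d²R` belongs to `H`. -/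
theorem paper_congruence_modulo_d_squared
    (k : Type*) [Field k] [NumberField k] (m : ℕ) (hm : 2 ≤ m) (n : ℕ) (hn : 2 ≤ n)
    (H : Subgroup (Matrix.SpecialLinearGroup (Fin n) (paperSRing k m)))
    (hnorm : H.Normal) (hfin : H.FiniteIndex)
    (d : ℕ) (hd : 0 < d) (hindex : H.index ∣ d) (hmd : m ∣ d)
    (A : Matrix.SpecialLinearGroup (Fin n) (paperSRing k m))
    (hA : ∀ i j : Fin n, ∃ s : paperSRing k m,
      ((A : Matrix (Fin n) (Fin n) (paperSRing k m)) - 1) i j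
        = (d : paperSRing k m) ^ 2 * s) :
    A ∈ H := by
  haveI := hnorm
  haveI := hfin
  refine PaperAux.abstract_main ((d : paperSRing k m)^2) H hnorm ?_ ?_ A ?_
  · -- q-elementary matrices lie in H
    intro i j hij c hc
    obtain ⟨s, rfl⟩ := hc
    have hp : PaperAux.elSL i j hij ((d : paperSRing k m)^2 * s)
        = (PaperAux.elSL i j hij ((d : paperSRing k m) * s)) ^ d := by
      rw [PaperAux.elSL_pow]
      congr 1
      ring
    rw [hp]
    obtain ⟨e, he⟩ := hindex
    rw [he, pow_mul]
    exact Subgroup.pow_mem H (Subgroup.pow_index_mem H _) e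
  · -- units congruent to 1
    intro x hx
    obtain ⟨w, hw⟩ := PaperAux.paper_inv_exists k m hm d hmd x hx
    refine ⟨w, hw, ?_⟩
    obtain ⟨s, hs⟩ := hx
    refine ⟨-(s * w), ?_⟩
    have : (1 + x) * w = 1 := hw
    rw [hs] at this
    linear_combination this
  · -- the congruence hypothesis
    intro i j
    obtain ⟨s, hs⟩ := hA i j
    exact ⟨s, hs⟩
end
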